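/- arXiv:1912.04332 — 2 statements merged into one kernel-verified Lean document; each statement's English description precedes it below -/
import Mathlib

section
/- Let 𝒜 be a K-linear triangulated category with Serre functor S satisfying S² ≅ [2m], admitting a semiorthogonal decomposition 𝒜 = ⟨𝒦, L₁, …, L_N⟩ where {L₁,…,L_N} is an orthogonal exceptional collection. For each i let S_i be the cocone of the unique nonzero morphism L_i → S(L_i). Then S_i lies in 𝒦, i.e. RHom(L_j, S_i) = 0 for all j = 1, …, N. -/
open CategoryTheory CategoryTheory.Limits CategoryTheory.Pretriangulated

universe v u

section Helpers

variable {C : Type u} [Category.{v} C] [Preadditive C] [HasShift C ℤ]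
  [∀ n : ℤ, (CategoryTheory.shiftFunctor C n).Additive]

lemma shift_vanish_of_unshift (q : ℤ) (X Y : C)
    (h : ∀ g : X⟦-q⟧ ⟶ Y, g = 0) (f : X ⟶ Y⟦q⟧) : f = 0 := by
  have h1 : f⟦-q⟧' ≫ (shiftFunctorCompIsoId C q (-q) (add_neg_cancel q)).hom.app Y = 0 := h _
  have h2 : f⟦-q⟧' = 0 := by
    rw [← cancel_mono ((shiftFunctorCompIsoId C q (-q) (add_neg_cancel q)).hom.app Y), zero_comp]
    exact h1
  apply (shiftFunctor C (-q)).map_injective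
  rw [h2, Functor.map_zero]

lemma unshift_vanish (q : ℤ) (X Y : C)
    (h : ∀ f : X ⟶ Y⟦q⟧, f = 0) (g : X⟦-q⟧ ⟶ Y) : g = 0 := by
  have h1 : (shiftFunctorCompIsoId C (-q) q (neg_add_cancel q)).inv.app X ≫ g⟦q⟧' = 0 := h _
  have h2 : g⟦q⟧' = 0 := by
    rw [← cancel_epi ((shiftFunctorCompIsoId C (-q) q (neg_add_cancel q)).inv.app X), comp_zero]
    exact h1
  apply (shiftFunctor C q).map_injective
  rw [h2, Functor.map_zero]

lemma shift_shift_vanish (a b : ℤ) (X Y : C)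
    (h : ∀ g : X⟦a - b⟧ ⟶ Y, g = 0) (f : X⟦a⟧ ⟶ Y⟦b⟧) : f = 0 := by
  have h1 : (shiftFunctorAdd' C a (-b) (a - b) (by ring)).hom.app X ≫ f⟦-b⟧' ≫
      (shiftFunctorCompIsoId C b (-b) (add_neg_cancel b)).hom.app Y = 0 := h _
  have h2 : f⟦-b⟧' = 0 := by
    rw [← cancel_epi ((shiftFunctorAdd' C a (-b) (a - b) (by ring)).hom.app X),
      ← cancel_mono ((shiftFunctorCompIsoId C b (-b) (add_neg_cancel b)).hom.app Y),
      comp_zero, zero_comp, Category.assoc]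
    exact h1
  apply (shiftFunctor C (-b)).map_injective
  rw [h2, Functor.map_zero]

end Helpers

/-- A Serre functor on a `K`-linear category: an equivalence `S` with bifunctorial
isomorphisms `Hom(A, B) ≅ Hom(B, S A)^∨`. -/
structure SerreFunctor (K : Type*) [Field K] (C : Type u) [Category.{v} C]
    [Preadditive C] [CategoryTheory.Linear K C] where
  S : C ⥤ C
  isEquiv : S.IsEquivalence
  pairing : ∀ A B : C, (A ⟶ B) ≃ₗ[K] Module.Dual K (B ⟶ S.obj A)
  natural : ∀ {A A' B B' : C} (h : A' ⟶ A) (f : B ⟶ B') (g : A ⟶ B)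
    (φ : B' ⟶ S.obj A'),
    pairing A' B' (h ≫ g ≫ f) φ = pairing A B g (f ≫ φ ≫ S.map h)

/-- In an `m`-Enriques category `𝒜 = ⟨𝒦, L₁, …, L_N⟩` with `{Lᵢ}` an
orthogonal exceptional collection, the cocone `Sᵢ` of the nonzero map `Lᵢ → S(Lᵢ)`
lies in `𝒦`, i.e. `RHom(Lⱼ, Sᵢ) = 0` for all `j`. -/
theorem stmt4 {K : Type*} [Field K] {C : Type u} [Category.{v} C]
    [Preadditive C] [CategoryTheory.Linear K C] [HasZeroObject C] [HasShift C ℤ]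
    [∀ n : ℤ, (CategoryTheory.shiftFunctor C n).Additive] [Pretriangulated C]
    [∀ A B : C, FiniteDimensional K (A ⟶ B)]
    (m : ℤ) (S : SerreFunctor K C)
    (hCY : Nonempty (S.S ⋙ S.S ≅ CategoryTheory.shiftFunctor C (2 * m)))
    {N : ℕ} (hN : 1 ≤ N) (L : Fin N → C)
    (hexc0 : ∀ i, Module.finrank K (L i ⟶ L i) = 1)
    (hexcp : ∀ i, ∀ p : ℤ, p ≠ 0 → ∀ f : L i ⟶ (L i)⟦p⟧, f = 0)
    (horth : ∀ i j, i ≠ j → ∀ p : ℤ, ∀ f : L i ⟶ (L j)⟦p⟧, f = 0)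
    (Si : Fin N → C) (u : ∀ i, Si i ⟶ L i) (v : ∀ i, L i ⟶ S.S.obj (L i))
    (w : ∀ i, S.S.obj (L i) ⟶ (Si i)⟦(1 : ℤ)⟧)
    (hv : ∀ i, v i ≠ 0)
    (hTri : ∀ i, Triangle.mk (u i) (v i) (w i) ∈ distTriang C) :
    ∀ (j i : Fin N) (p : ℤ) (f : L j ⟶ (Si i)⟦p⟧), f = 0 := by
  intro j i p f
  -- vanishing of Hom(L i, (L j)⟦q⟧) when j ≠ i or q ≠ 0
  have W0 : ∀ q : ℤ, (j ≠ i ∨ q ≠ 0) → ∀ g : L i ⟶ (L j)⟦q⟧, g = 0 := by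
    intro q hq g
    rcases eq_or_ne j i with rfl | hne
    · exact hexcp _ q (hq.resolve_left (fun h => h rfl)) g
    · exact horth i j (Ne.symm hne) q g
  -- by Serre duality, vanishing of Hom((L j)⟦q⟧, S (L i))
  have W2 : ∀ q : ℤ, (j ≠ i ∨ q ≠ 0) → ∀ g : (L j)⟦q⟧ ⟶ S.S.obj (L i), g = 0 := by
    intro q hq g
    refine (Module.forall_dual_apply_eq_zero_iff K g).mp ?_
    intro φ
    obtain ⟨x, rfl⟩ := (S.pairing (L i) ((L j)⟦q⟧)).surjective φ
    rw [W0 q hq x, map_zero]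
    rfl
  -- Hom(L i, S (L i)) is spanned by v i
  have hspan : ∀ g : L i ⟶ S.S.obj (L i), ∃ c : K, c • v i = g := by
    have e := S.pairing (L i) (L i)
    have h2 : Module.finrank K (L i ⟶ S.S.obj (L i)) = 1 := by
      rw [← Subspace.dual_finrank_eq, ← LinearEquiv.finrank_eq e]
      exact hexc0 i
    exact (finrank_eq_one_iff_of_nonzero' (v i) (hv i)).mp h2
  -- Hom(L i, L i) is spanned by the identity
  have hid : (𝟙 (L i) : L i ⟶ L i) ≠ 0 := by
    have : Nontrivial (L i ⟶ L i) := by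
      apply Module.nontrivial_of_finrank_pos (R := K)
      rw [hexc0 i]; exact one_pos
    intro h0
    obtain ⟨x, hx⟩ := exists_ne (0 : L i ⟶ L i)
    exact hx (by rw [← Category.comp_id x, h0, comp_zero])
  have hidspan : ∀ g : L i ⟶ L i, ∃ c : K, c • 𝟙 (L i) = g :=
    (finrank_eq_one_iff_of_nonzero' (𝟙 (L i)) hid).mp (hexc0 i)
  -- reduce to maps (L j)⟦-p⟧ ⟶ Si i
  apply shift_vanish_of_unshift p (L j) (Si i) ?_ f
  intro g
  -- step 1 : g ≫ u i = 0
  have h1 : g ≫ u i = 0 := by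
    by_cases hc : j = i ∧ p = 0
    · obtain ⟨rfl, rfl⟩ := hc
      have huv : u j ≫ v j = 0 := comp_distTriang_mor_zero₁₂ _ (hTri j)
      have hh : (g ≫ u j) ≫ v j = 0 := by rw [Category.assoc, huv, comp_zero]
      set F0 := shiftFunctorZero' C (-(0 : ℤ)) neg_zero with hF0
      obtain ⟨c, hcc⟩ := hidspan (F0.inv.app (L j) ≫ (g ≫ u j))
      have hcv : (c • 𝟙 (L j)) ≫ v j = 0 := by
        rw [hcc, Category.assoc, hh, comp_zero]
      rw [Linear.smul_comp, Category.id_comp] at hcv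
      have hc0 : c = 0 := by
        rcases smul_eq_zero.mp hcv with h0 | h0
        · exact h0
        · exact absurd h0 (hv j)
      have hah : F0.inv.app (L j) ≫ (g ≫ u j) = 0 := by
        rw [← hcc, hc0, zero_smul]
      have hba : F0.hom.app (L j) ≫ F0.inv.app (L j) = 𝟙 _ := F0.hom_inv_id_app (L j)
      calc g ≫ u j = (F0.hom.app (L j) ≫ F0.inv.app (L j)) ≫ (g ≫ u j) := by
            rw [hba, Category.id_comp]
        _ = F0.hom.app (L j) ≫ (F0.inv.app (L j) ≫ (g ≫ u j)) := by rw [Category.assoc]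
        _ = 0 := by rw [hah, comp_zero]
    · have hq : j ≠ i ∨ p ≠ 0 := by tauto
      have hvan : ∀ f' : L j ⟶ (L i)⟦p⟧, f' = 0 := by
        intro f'
        rcases eq_or_ne j i with rfl | hne
        · exact hexcp _ p (hq.resolve_left (fun h => h rfl)) f'
        · exact horth j i hne p f'
      exact unshift_vanish p (L j) (L i) hvan (g ≫ u i)
  -- step 2 : factor g through (S (L i))⟦-1⟧ using the inverse rotation of the triangle
  obtain ⟨k, hk⟩ := Triangle.coyoneda_exact₂ _ (inv_rot_of_distTriang _ (hTri i)) g h1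
  have hkw : k ≫ (w i)⟦(-1 : ℤ)⟧' = 0 := by
    by_cases hc : j = i ∧ p = 1
    · obtain ⟨rfl, rfl⟩ := hc
      obtain ⟨k₀, rfl⟩ := (shiftFunctor C (-1 : ℤ)).map_surjective k
      obtain ⟨c, rfl⟩ := hspan k₀
      have hvw : v j ≫ w j = 0 := comp_distTriang_mor_zero₂₃ _ (hTri j)
      have h3 : (shiftFunctor C (-1 : ℤ)).map (c • v j) ≫ (shiftFunctor C (-1 : ℤ)).map (w j) = 0 := by
        rw [← Functor.map_comp, Linear.smul_comp, hvw, smul_zero, Functor.map_zero]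
      exact h3
    · have hq : j ≠ i ∨ (-p - (-1 : ℤ)) ≠ 0 := by
        by_cases hji : j = i
        · right; intro h0; exact hc ⟨hji, by omega⟩
        · left; exact hji
      rw [shift_shift_vanish (-p) (-1) (L j) (S.S.obj (L i)) (W2 (-p - (-1)) hq) k]
      exact zero_comp
  rw [hk]
  have hmor : ((Triangle.mk (u i) (v i) (w i)).invRotate).mor₁ =
      -(w i)⟦(-1 : ℤ)⟧' ≫ (shiftEquiv C (1 : ℤ)).unitIso.inv.app (Si i) := rfl
  rw [hmor]
  have h3 : k ≫ (w i)⟦(-1 : ℤ)⟧' ≫ (shiftEquiv C (1 : ℤ)).unitIso.inv.app (Si i) = 0 := by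
    exact (Category.assoc _ _ _).symm.trans
      ((congrArg (· ≫ (shiftEquiv C (1 : ℤ)).unitIso.inv.app (Si i)) hkw).trans zero_comp)
  exact (Preadditive.comp_neg _ _).trans ((congrArg Neg.neg h3).trans neg_zero)
end

section
/- Let F: 𝒯₁ → 𝒯₂ be an exact functor between triangulated categories with semiorthogonal decompositions 𝒯ⱼ = ⟨𝒟₁ʲ, 𝒟₂ʲ⟩ by admissible subcategories. Assume: (a) F(𝒟ᵢ¹) ⊆ 𝒟ᵢ² and the restrictions Fᵢ: 𝒟ᵢ¹ → 𝒟ᵢ² are equivalences for i = 1, 2; and (b) for all A ∈ 𝒟₁¹ and B ∈ 𝒟₂¹, postcomposition with F(η_B) gives an isomorphism Hom(F(A), F(α₁₁Ψ₁(B))) ≅ Hom(F(A), F(B)), where Ψ₁ = α₁₁^! ∘ α₂₁ is the gluing functor and η_B: α₁₁Ψ₁(B) → α₂₁(B) the counit. If F admits left and right adjoints, then F is an equivalence. -/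
open CategoryTheory CategoryTheory.Limits CategoryTheory.Pretriangulated

universe v₁ v₂ w₁ w₂ w₃ w₄ u₁ u₂ u₃ u₄ u₅ u₆

section Helpers

private lemma bij_comp2 {α β γ : Sort*} {f : α → β} {g : β → γ}
    (hf : Function.Bijective f) (hg : Function.Bijective g) :
    Function.Bijective (fun a => g (f a)) :=
  hg.comp hf

private lemma bij_map {α β α' β' : Sort*} {e₁ : α → α'} {e₂ : β → β'} {f : α → β} {f' : α' → β'}
    (he₁ : Function.Bijective e₁) (he₂ : Function.Bijective e₂) (hf : Function.Bijective f)
    (h : ∀ a, f' (e₁ a) = e₂ (f a)) : Function.Bijective f' := by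
  constructor
  · intro x y hxy
    obtain ⟨a, rfl⟩ := he₁.2 x
    obtain ⟨b, rfl⟩ := he₁.2 y
    rw [h, h] at hxy
    rw [hf.1 (he₂.1 hxy)]
  · intro y
    obtain ⟨b, rfl⟩ := he₂.2 y
    obtain ⟨a, rfl⟩ := hf.2 b
    exact ⟨e₁ a, h a⟩

private lemma bij_map' {α β α' β' : Sort*} {e₁ : α → α'} {e₂ : β → β'} {f : α' → β'} {f' : α → β}
    (he₁ : Function.Bijective e₁) (he₂ : Function.Bijective e₂) (hf : Function.Bijective f)
    (h : ∀ a, f (e₁ a) = e₂ (f' a)) : Function.Bijective f' := by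
  constructor
  · intro x y hxy
    exact he₁.1 (hf.1 (by rw [h, h, hxy]))
  · intro b
    obtain ⟨a', ha'⟩ := hf.2 (e₂ b)
    obtain ⟨a, rfl⟩ := he₁.2 a'
    exact ⟨a, he₂.1 (by rw [← h, ha'])⟩

private lemma bij_postcomp {C : Type*} [Category C] {X Y Z : C} (i : Y ⟶ Z) [IsIso i] :
    Function.Bijective (fun φ : X ⟶ Y => φ ≫ i) :=
  ⟨fun a b h => by simpa using congrArg (fun ψ => ψ ≫ inv i) h,
   fun ψ => ⟨ψ ≫ inv i, by simp⟩⟩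

private lemma bij_precomp {C : Type*} [Category C] {X Y Z : C} (i : X ⟶ Y) [IsIso i] :
    Function.Bijective (fun φ : Y ⟶ Z => i ≫ φ) :=
  ⟨fun a b h => by simpa using congrArg (fun ψ => inv i ≫ ψ) h,
   fun ψ => ⟨inv i ≫ ψ, by simp⟩⟩

private lemma bij_ffmap {C D : Type*} [Category C] [Category D] (G : C ⥤ D)
    [G.Full] [G.Faithful] (X Y : C) :
    Function.Bijective (fun φ : X ⟶ Y => G.map φ) :=
  ⟨fun _ _ h => G.map_injective h, G.map_surjective⟩

end Helpers

/-- Lemma 2.1: Let `F : 𝒯₁ → 𝒯₂` be an exact functor between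
triangulated categories with semiorthogonal decompositions `𝒯ⱼ = ⟨𝒟₁ʲ, 𝒟₂ʲ⟩`
(given by fully faithful embeddings `αᵢⱼ`, semiorthogonality, and decomposition
triangles), admitting left and right adjoints. If (a) `F` restricts to
equivalences `Fᵢ : 𝒟ᵢ¹ → 𝒟ᵢ²` and (b) postcomposition with `F(η_B)` induces
isomorphisms `Hom(F(α₁₁ A), F(α₁₁ Ψ₁ B)) ≅ Hom(F(α₁₁ A), F(α₂₁ B))`, where
`Ψ₁ = α₁₁^! ∘ α₂₁` is the gluing functor and `η_B` the counit, then `F` is an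
equivalence. -/
theorem stmt14
    {T1 : Type u₁} [Category.{v₁} T1] [HasZeroObject T1] [Preadditive T1]
    [HasShift T1 ℤ] [∀ n : ℤ, (CategoryTheory.shiftFunctor T1 n).Additive]
    [Pretriangulated T1]
    {T2 : Type u₂} [Category.{v₂} T2] [HasZeroObject T2] [Preadditive T2]
    [HasShift T2 ℤ] [∀ n : ℤ, (CategoryTheory.shiftFunctor T2 n).Additive]
    [Pretriangulated T2]
    {D11 : Type u₃} [Category.{w₁} D11] {D21 : Type u₄} [Category.{w₂} D21]
    {D12 : Type u₅} [Category.{w₃} D12] {D22 : Type u₆} [Category.{w₄} D22]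
    (a11 : D11 ⥤ T1) [a11.Full] [a11.Faithful]
    (a21 : D21 ⥤ T1) [a21.Full] [a21.Faithful]
    (a12 : D12 ⥤ T2) [a12.Full] [a12.Faithful]
    (a22 : D22 ⥤ T2) [a22.Full] [a22.Faithful]
    -- semiorthogonality in `T1` and `T2`:
    (horth1 : ∀ (X : D21) (Y : D11) (f : a21.obj X ⟶ a11.obj Y), f = 0)
    (horth2 : ∀ (X : D22) (Y : D12) (f : a22.obj X ⟶ a12.obj Y), f = 0)
    -- every object of `Tⱼ` sits in a decomposition triangle:
    (hdec1 : ∀ X : T1, ∃ (B : D21) (A : D11) (f : a21.obj B ⟶ X)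
      (g : X ⟶ a11.obj A) (h : a11.obj A ⟶ (a21.obj B)⟦(1 : ℤ)⟧),
      Triangle.mk f g h ∈ distTriang T1)
    (hdec2 : ∀ X : T2, ∃ (B : D22) (A : D12) (f : a22.obj B ⟶ X)
      (g : X ⟶ a12.obj A) (h : a12.obj A ⟶ (a22.obj B)⟦(1 : ℤ)⟧),
      Triangle.mk f g h ∈ distTriang T2)
    -- the right adjoint `α₁₁^!` of `α₁₁`, giving the gluing functor `Ψ₁ = α₁₁^! ∘ α₂₁`:
    (r11 : T1 ⥤ D11) (adj11 : a11 ⊣ r11)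
    -- the exact functor `F` with left and right adjoints:
    (F : T1 ⥤ T2) [F.CommShift ℤ] [F.IsTriangulated]
    [F.IsLeftAdjoint] [F.IsRightAdjoint]
    -- (a) `F` restricts to equivalences on the components:
    (F1 : D11 ⥤ D12) (F2 : D21 ⥤ D22)
    (hF1 : a11 ⋙ F ≅ F1 ⋙ a12) (hF2 : a21 ⋙ F ≅ F2 ⋙ a22)
    [F1.IsEquivalence] [F2.IsEquivalence]
    -- (b) postcomposition with `F(η_B)` is bijective:
    (hb : ∀ (A : D11) (B : D21),
      Function.Bijective fun φ : F.obj (a11.obj A) ⟶ F.obj (a11.obj (r11.obj (a21.obj B))) =>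
        φ ≫ F.map (adj11.counit.app (a21.obj B))) :
    F.IsEquivalence := by
  have adj : F ⊣ F.rightAdjoint := Adjunction.ofIsLeftAdjoint F
  have adjL : F.leftAdjoint ⊣ F := Adjunction.ofIsRightAdjoint F
  -- relation between `F.map` and composition with the unit of `F ⊣ R`
  have hrel : ∀ (Z W : T1) (φ : Z ⟶ W),
      (adj.homEquiv Z (F.obj W)) (F.map φ) = φ ≫ adj.unit.app W := by
    intro Z W φ
    rw [Adjunction.homEquiv_unit]
    simpa using (adj.unit.naturality φ).symm
  -- relation between `F.map` and precomposition with the counit of `L ⊣ F`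
  have hrelL : ∀ (W Z : T1) (φ : W ⟶ Z),
      (adjL.homEquiv (F.obj W) Z) (adjL.counit.app W ≫ φ) = F.map φ := by
    intro W Z φ
    rw [Adjunction.homEquiv_unit, F.map_comp, ← Category.assoc,
      adjL.right_triangle_components, Category.id_comp]
  -- all maps `F (a21 B) ⟶ F (a11 A)` vanish
  have hz2 : ∀ (B : D21) (A : D11) (u : F.obj (a21.obj B) ⟶ F.obj (a11.obj A)), u = 0 := by
    intro B A u
    have h0 : hF2.inv.app B ≫ u ≫ hF1.hom.app A = 0 := horth2 (F2.obj B) (F1.obj A) _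
    have h1 : u = hF2.hom.app B ≫ (hF2.inv.app B ≫ u ≫ hF1.hom.app A) ≫ hF1.inv.app A := by
      simp
    rw [h1, h0, zero_comp, comp_zero]
  -- `F` is bijective on `Hom(a11 A, a11 A')`
  have hcase1 : ∀ (A A' : D11),
      Function.Bijective (fun u : a11.obj A ⟶ a11.obj A' => F.map u) := by
    intro A A'
    exact bij_map (e₁ := fun w : A ⟶ A' => a11.map w)
      (e₂ := fun v : a12.obj (F1.obj A) ⟶ a12.obj (F1.obj A') =>
        hF1.hom.app A ≫ v ≫ hF1.inv.app A')
      (bij_ffmap a11 A A')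
      (bij_comp2 (bij_postcomp (hF1.inv.app A')) (bij_precomp (hF1.hom.app A)))
      (bij_comp2 (bij_ffmap F1 A A') (bij_ffmap a12 _ _))
      (fun w => (NatIso.naturality_2 hF1 w).symm)
  -- `F` is bijective on `Hom(a21 B, a21 B')`
  have hcase2 : ∀ (B B' : D21),
      Function.Bijective (fun u : a21.obj B ⟶ a21.obj B' => F.map u) := by
    intro B B'
    exact bij_map (e₁ := fun w : B ⟶ B' => a21.map w)
      (e₂ := fun v : a22.obj (F2.obj B) ⟶ a22.obj (F2.obj B') =>
        hF2.hom.app B ≫ v ≫ hF2.inv.app B')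
      (bij_ffmap a21 B B')
      (bij_comp2 (bij_postcomp (hF2.inv.app B')) (bij_precomp (hF2.hom.app B)))
      (bij_comp2 (bij_ffmap F2 B B') (bij_ffmap a22 _ _))
      (fun w => (NatIso.naturality_2 hF2 w).symm)
  -- `F` is bijective on `Hom(a11 A, a21 B)` (uses hypothesis (b))
  have hbcounit : ∀ (A : D11) (B : D21),
      Function.Bijective (fun φ : a11.obj A ⟶ a21.obj B => F.map φ) := by
    intro A B
    have hpost : Function.Bijective
        (fun ψ : a11.obj A ⟶ a11.obj (r11.obj (a21.obj B)) =>
          ψ ≫ adj11.counit.app (a21.obj B)) := by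
      refine bij_map (e₁ := fun θ : A ⟶ r11.obj (a21.obj B) => a11.map θ)
        (e₂ := fun x : a11.obj A ⟶ a21.obj B => x)
        (bij_ffmap a11 _ _) Function.bijective_id
        (f := fun θ => (adj11.homEquiv A (a21.obj B)).symm θ)
        (adj11.homEquiv A (a21.obj B)).symm.bijective ?_
      intro θ
      simp [Adjunction.homEquiv_counit]
    exact bij_map (e₁ := fun ψ : a11.obj A ⟶ a11.obj (r11.obj (a21.obj B)) =>
        ψ ≫ adj11.counit.app (a21.obj B))
      (e₂ := fun Φ : F.obj (a11.obj A) ⟶ F.obj (a11.obj (r11.obj (a21.obj B))) =>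
        Φ ≫ F.map (adj11.counit.app (a21.obj B)))
      hpost (hb A B) (hcase1 A (r11.obj (a21.obj B)))
      (fun ψ => F.map_comp _ _)
  -- `F` is bijective on `Hom(Z, a11 A)` for every `Z` (the unit of `F ⊣ R` is
  -- invertible on objects of the first component)
  have hGa11 : ∀ (A : D11) (Z : T1),
      Function.Bijective (fun φ : Z ⟶ a11.obj A => F.map φ) := by
    intro A
    have hub1 : ∀ (Z : T1),
        Function.Bijective (fun φ : Z ⟶ a11.obj A => F.map φ) ↔
        Function.Bijective (fun φ : Z ⟶ a11.obj A => φ ≫ adj.unit.app (a11.obj A)) := by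
      intro Z
      constructor
      · intro hF'
        exact bij_map (e₁ := fun φ : Z ⟶ a11.obj A => φ)
          (e₂ := fun Φ => (adj.homEquiv Z (F.obj (a11.obj A))) Φ)
          Function.bijective_id (adj.homEquiv _ _).bijective hF'
          (fun φ => (hrel Z _ φ).symm)
      · intro hu
        exact bij_map (e₁ := fun φ : Z ⟶ a11.obj A => φ)
          (e₂ := fun ψ => (adj.homEquiv Z (F.obj (a11.obj A))).symm ψ)
          Function.bijective_id (adj.homEquiv _ _).symm.bijective hu
          (fun φ => by rw [← hrel Z _ φ, Equiv.symm_apply_apply])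
    have hbij_t1 : ∀ (A' : D11), Function.Bijective
        (fun φ : a11.obj A' ⟶ a11.obj A => φ ≫ adj.unit.app (a11.obj A)) :=
      fun A' => (hub1 _).1 (hcase1 A' A)
    have hbij_t2 : ∀ (B' : D21), Function.Bijective
        (fun φ : a21.obj B' ⟶ a11.obj A => φ ≫ adj.unit.app (a11.obj A)) := by
      intro B'
      constructor
      · intro x y _
        rw [horth1 B' A x, horth1 B' A y]
      · intro ψ
        refine ⟨0, ?_⟩
        have h1 : (adj.homEquiv (a21.obj B') (F.obj (a11.obj A))).symm ψ = 0 := hz2 B' A _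
        have h2 := hrel (a21.obj B') (a11.obj A) 0
        rw [F.map_zero] at h2
        have h3 : ψ = (adj.homEquiv (a21.obj B') (F.obj (a11.obj A))) 0 := by
          conv_lhs => rw [← Equiv.apply_symm_apply (adj.homEquiv _ _) ψ, h1]
        dsimp only
        rw [h3, h2]
    obtain ⟨B₁, A₁, f₁, g₁, h₁, ht₁⟩ := hdec1 (F.rightAdjoint.obj (F.obj (a11.obj A)))
    have hf₁ : f₁ = 0 := by
      have h1 : (adj.homEquiv (a21.obj B₁) (F.obj (a11.obj A))).symm f₁ = 0 := hz2 B₁ A _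
      have h2 := hrel (a21.obj B₁) (a11.obj A) 0
      rw [F.map_zero] at h2
      calc f₁ = (adj.homEquiv _ _) ((adj.homEquiv _ _).symm f₁) :=
            (Equiv.apply_symm_apply _ _).symm
        _ = (adj.homEquiv _ _) 0 := by rw [h1]
        _ = 0 ≫ adj.unit.app (a11.obj A) := h2
        _ = 0 := zero_comp
    obtain ⟨q, hq⟩ : ∃ k : a11.obj A₁ ⟶ F.rightAdjoint.obj (F.obj (a11.obj A)), 𝟙 _ = g₁ ≫ k := Triangle.yoneda_exact₂ _ ht₁
      (𝟙 (F.rightAdjoint.obj (F.obj (a11.obj A))))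
      (by rw [hf₁]; exact zero_comp)
    obtain ⟨qb, hqb⟩ := (hbij_t1 A₁).2 q
    dsimp at hqb
    have hl : (g₁ ≫ qb) ≫ adj.unit.app (a11.obj A) = 𝟙 _ := by
      rw [Category.assoc, hqb]
      exact hq.symm
    have hr : adj.unit.app (a11.obj A) ≫ (g₁ ≫ qb) = 𝟙 _ := by
      apply (hbij_t1 A).1
      dsimp only
      simp only [Category.assoc, hqb]
      rw [← hq]
      exact (Category.comp_id _).trans (Category.id_comp _).symm
    haveI : IsIso (adj.unit.app (a11.obj A)) := ⟨⟨g₁ ≫ qb, hr, hl⟩⟩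
    intro Z
    rw [hub1 Z]
    exact bij_postcomp (adj.unit.app (a11.obj A))
  -- `F` is bijective on `Hom(a21 B, Z)` for every `Z` (the counit of `L ⊣ F` is
  -- invertible on objects of the second component)
  have hHa21 : ∀ (B : D21) (Z : T1),
      Function.Bijective (fun φ : a21.obj B ⟶ Z => F.map φ) := by
    intro B
    have hub1 : ∀ (Z : T1),
        Function.Bijective (fun φ : a21.obj B ⟶ Z => F.map φ) ↔
        Function.Bijective (fun φ : a21.obj B ⟶ Z => adjL.counit.app (a21.obj B) ≫ φ) := by
      intro Z
      constructor
      · intro hF'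
        exact bij_map (e₁ := fun φ : a21.obj B ⟶ Z => φ)
          (e₂ := fun Φ => (adjL.homEquiv (F.obj (a21.obj B)) Z).symm Φ)
          Function.bijective_id (adjL.homEquiv _ _).symm.bijective hF'
          (fun φ => by rw [← hrelL _ Z φ, Equiv.symm_apply_apply])
      · intro hc
        exact bij_map (e₁ := fun φ : a21.obj B ⟶ Z => φ)
          (e₂ := fun ψ => (adjL.homEquiv (F.obj (a21.obj B)) Z) ψ)
          Function.bijective_id (adjL.homEquiv _ _).bijective hc
          (fun φ => (hrelL _ Z φ).symm)
    have hbij_t1 : ∀ (B' : D21), Function.Bijective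
        (fun φ : a21.obj B ⟶ a21.obj B' => adjL.counit.app (a21.obj B) ≫ φ) :=
      fun B' => (hub1 _).1 (hcase2 B B')
    have hzeq : ∀ (A' : D11),
        (adjL.homEquiv (F.obj (a21.obj B)) (a11.obj A')) 0 = 0 := by
      intro A'
      have h2 := hrelL (a21.obj B) (a11.obj A') 0
      rw [F.map_zero, comp_zero] at h2
      exact h2
    obtain ⟨B₂, A₂, f₂, g₂, h₂, ht₂⟩ := hdec1 (F.leftAdjoint.obj (F.obj (a21.obj B)))
    have hg₂ : g₂ = 0 := by
      apply (adjL.homEquiv _ _).injective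
      rw [hzeq A₂]
      exact hz2 B A₂ _
    obtain ⟨s, hs⟩ : ∃ k : F.leftAdjoint.obj (F.obj (a21.obj B)) ⟶ a21.obj B₂, 𝟙 _ = k ≫ f₂ := Triangle.coyoneda_exact₂ _ ht₂
      (𝟙 (F.leftAdjoint.obj (F.obj (a21.obj B))))
      (by rw [hg₂]; exact comp_zero)
    obtain ⟨sb, hsb⟩ := (hbij_t1 B₂).2 s
    dsimp at hsb
    have hl : adjL.counit.app (a21.obj B) ≫ (sb ≫ f₂) = 𝟙 _ := by
      rw [← Category.assoc, hsb]
      exact hs.symm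
    have hr : (sb ≫ f₂) ≫ adjL.counit.app (a21.obj B) = 𝟙 _ := by
      apply (hbij_t1 B).1
      dsimp only
      simp only [← Category.assoc, hsb]
      rw [← hs]
      exact (Category.id_comp _).trans (Category.comp_id _).symm
    haveI : IsIso (adjL.counit.app (a21.obj B)) := ⟨⟨sb ≫ f₂, hl, hr⟩⟩
    intro Z
    rw [hub1 Z]
    exact bij_precomp (adjL.counit.app (a21.obj B))
  -- transporting the previous bijectivity statements along shifts
  have hGshift : ∀ (W : T1) (n : ℤ),
      (∀ Z : T1, Function.Bijective (fun φ : Z ⟶ W => F.map φ)) →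
      ∀ Z : T1, Function.Bijective (fun φ : Z ⟶ W⟦n⟧ => F.map φ) := by
    intro W n hW Z
    refine bij_map' (e₁ := fun φ : Z ⟶ W⟦n⟧ =>
        φ⟦(-n : ℤ)⟧' ≫ (shiftFunctorCompIsoId T1 n (-n) (add_neg_cancel n)).hom.app W)
      (e₂ := fun Φ : F.obj Z ⟶ F.obj (W⟦n⟧) =>
        (F.commShiftIso (-n : ℤ)).hom.app Z ≫ Φ⟦(-n : ℤ)⟧' ≫
          (F.commShiftIso (-n : ℤ)).inv.app (W⟦n⟧) ≫
          F.map ((shiftFunctorCompIsoId T1 n (-n) (add_neg_cancel n)).hom.app W))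
      (bij_comp2 (bij_ffmap (shiftFunctor T1 (-n : ℤ)) _ _) (bij_postcomp _))
      (bij_comp2 (bij_comp2 (bij_ffmap (shiftFunctor T2 (-n : ℤ)) _ _) (bij_postcomp _))
        (bij_precomp _))
      (hW ((shiftFunctor T1 (-n : ℤ)).obj Z)) ?_
    intro φ
    rw [F.map_comp, ← F.commShiftIso_hom_naturality_assoc φ (-n : ℤ)]
    simp
  have hHshift : ∀ (W : T1) (n : ℤ),
      (∀ Z : T1, Function.Bijective (fun φ : W ⟶ Z => F.map φ)) →
      ∀ Z : T1, Function.Bijective (fun φ : W⟦n⟧ ⟶ Z => F.map φ) := by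
    intro W n hW Z
    refine bij_map' (e₁ := fun φ : W⟦n⟧ ⟶ Z =>
        (shiftFunctorCompIsoId T1 n (-n) (add_neg_cancel n)).inv.app W ≫ φ⟦(-n : ℤ)⟧')
      (e₂ := fun Φ : F.obj (W⟦n⟧) ⟶ F.obj Z =>
        F.map ((shiftFunctorCompIsoId T1 n (-n) (add_neg_cancel n)).inv.app W) ≫
          (F.commShiftIso (-n : ℤ)).hom.app (W⟦n⟧) ≫ Φ⟦(-n : ℤ)⟧' ≫
          (F.commShiftIso (-n : ℤ)).inv.app Z)
      (bij_comp2 (bij_ffmap (shiftFunctor T1 (-n : ℤ)) _ _) (bij_precomp _))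
      (bij_comp2 (bij_comp2 (bij_comp2 (bij_ffmap (shiftFunctor T2 (-n : ℤ)) _ _)
        (bij_postcomp _)) (bij_precomp _)) (bij_precomp _))
      (hW ((shiftFunctor T1 (-n : ℤ)).obj Z)) ?_
    intro φ
    rw [F.map_comp]
    congr 1
    rw [← F.commShiftIso_hom_naturality_assoc φ (-n : ℤ)]
    simp
  -- `F` is bijective on `Hom(Z, a21 B')` for every `Z`
  have hG21inj : ∀ (B' : D21) (Z : T1) (φ : Z ⟶ a21.obj B'), F.map φ = 0 → φ = 0 := by
    intro B' Z φ h0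
    obtain ⟨B₄, A₄, f₄, g₄, h₄, ht₄⟩ := hdec1 Z
    have h1 : f₄ ≫ φ = 0 := by
      apply (hHa21 B₄ (a21.obj B')).1
      dsimp only
      rw [F.map_comp, h0, comp_zero, F.map_zero]
    obtain ⟨ψ, hψ⟩ : ∃ k : a11.obj A₄ ⟶ a21.obj B', φ = g₄ ≫ k := Triangle.yoneda_exact₂ _ ht₄ φ h1
    have h2 : F.map g₄ ≫ F.map ψ = 0 := by
      rw [← F.map_comp, ← hψ, h0]
    obtain ⟨ρ, hρ⟩ : ∃ k : F.obj ((a21.obj B₄)⟦(1 : ℤ)⟧) ⟶ F.obj (a21.obj B'),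
        F.map ψ = F.map h₄ ≫ k := Triangle.yoneda_exact₂ _
      (F.map_distinguished _ (rot_of_distTriang _ ht₄)) (F.map ψ) h2
    obtain ⟨σ, hσ⟩ := (hHshift (a21.obj B₄) 1 (hHa21 B₄) (a21.obj B')).2 ρ
    dsimp only at hσ
    have h3 : ψ = h₄ ≫ σ := by
      apply (hbcounit A₄ B').1
      dsimp only
      rw [F.map_comp, hσ, hρ]
    have hz23 : g₄ ≫ h₄ = 0 := comp_distTriang_mor_zero₂₃ _ ht₄
    rw [hψ, h3, ← Category.assoc, hz23, zero_comp]
  have hG21 : ∀ (B' : D21) (Z : T1),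
      Function.Bijective (fun φ : Z ⟶ a21.obj B' => F.map φ) := by
    intro B' Z
    constructor
    · intro x y hxy
      dsimp only at hxy
      have := hG21inj B' Z (x - y) (by rw [F.map_sub, hxy, sub_self])
      rwa [sub_eq_zero] at this
    · intro Φ
      obtain ⟨B₄, A₄, f₄, g₄, h₄, ht₄⟩ := hdec1 Z
      obtain ⟨τ, hτ⟩ := (hHa21 B₄ (a21.obj B')).2 (F.map f₄ ≫ Φ)
      dsimp only at hτ
      have hm : (Triangle.mk f₄ g₄ h₄).invRotate.mor₁ ≫ τ = 0 := by
        apply hG21inj B'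
        erw [F.map_comp, hτ, ← Category.assoc, ← F.map_comp]
        have hz : (Triangle.mk f₄ g₄ h₄).invRotate.mor₁ ≫ f₄ = 0 :=
          comp_distTriang_mor_zero₁₂ _ (inv_rot_of_distTriang _ ht₄)
        rw [hz, F.map_zero, zero_comp]
      obtain ⟨φ₀, hφ₀⟩ : ∃ g : Z ⟶ a21.obj B', τ = f₄ ≫ g := Triangle.yoneda_exact₂ _ (inv_rot_of_distTriang _ ht₄) τ hm
      have hφ₀' : τ = f₄ ≫ (show Z ⟶ a21.obj B' from φ₀) := hφ₀
      have hΞ : F.map f₄ ≫ (Φ - F.map (show Z ⟶ a21.obj B' from φ₀)) = 0 := by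
        rw [Preadditive.comp_sub, ← hτ, hφ₀', F.map_comp, sub_self]
      obtain ⟨P, hP⟩ : ∃ k : F.obj (a11.obj A₄) ⟶ F.obj (a21.obj B'),
          Φ - F.map φ₀ = F.map g₄ ≫ k := Triangle.yoneda_exact₂ _ (F.map_distinguished _ ht₄)
        (Φ - F.map (show Z ⟶ a21.obj B' from φ₀)) hΞ
      obtain ⟨π, hπ⟩ := (hbcounit A₄ B').2 P
      dsimp only at hπ
      refine ⟨(show Z ⟶ a21.obj B' from φ₀) + g₄ ≫ π, ?_⟩
      dsimp only
      rw [F.map_add, F.map_comp, hπ, ← hP]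
      abel
  -- full faithfulness of `F`
  have hFFinj : ∀ (X Y : T1) (φ : X ⟶ Y), F.map φ = 0 → φ = 0 := by
    intro X Y φ h0
    obtain ⟨B', A', f, g, h, ht⟩ := hdec1 Y
    have h1 : φ ≫ g = 0 := by
      apply (hGa11 A' X).1
      dsimp only
      rw [F.map_comp, h0, zero_comp, F.map_zero]
    obtain ⟨ψ, hψ⟩ : ∃ k : X ⟶ a21.obj B', φ = k ≫ f := Triangle.coyoneda_exact₂ _ ht φ h1
    have h2 : F.map ψ ≫ F.map f = 0 := by rw [← F.map_comp, ← hψ, h0]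
    obtain ⟨ρ, hρ⟩ : ∃ k : F.obj X ⟶ F.obj ((a11.obj A')⟦(-1 : ℤ)⟧),
        F.map ψ = k ≫ F.map (Triangle.mk f g h).invRotate.mor₁ := Triangle.coyoneda_exact₂ _
      (F.map_distinguished _ (inv_rot_of_distTriang _ ht)) (F.map ψ) h2
    obtain ⟨σ, hσ⟩ := (hGshift (a11.obj A') (-1 : ℤ) (hGa11 A') X).2
      (show F.obj X ⟶ F.obj ((a11.obj A')⟦(-1 : ℤ)⟧) from ρ)
    dsimp only at hσ
    have h3 : ψ = σ ≫ (Triangle.mk f g h).invRotate.mor₁ := by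
      apply (hG21 B' X).1
      dsimp only
      erw [F.map_comp, hσ]
      exact hρ
    have hz12 : (Triangle.mk f g h).invRotate.mor₁ ≫ f = 0 :=
      comp_distTriang_mor_zero₁₂ _ (inv_rot_of_distTriang _ ht)
    erw [hψ, h3, Category.assoc, hz12, comp_zero]
  have hFF : ∀ (X Y : T1), Function.Bijective (fun φ : X ⟶ Y => F.map φ) := by
    intro X Y
    constructor
    · intro x y hxy
      dsimp only at hxy
      have := hFFinj X Y (x - y) (by rw [F.map_sub, hxy, sub_self])
      rwa [sub_eq_zero] at this
    · intro Φ
      obtain ⟨B', A', f, g, h, ht⟩ := hdec1 Y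
      obtain ⟨τ, hτ⟩ := (hGa11 A' X).2 (Φ ≫ F.map g)
      dsimp only at hτ
      have hgh : g ≫ h = 0 := comp_distTriang_mor_zero₂₃ _ ht
      have hτh : τ ≫ h = 0 := by
        apply (hGshift (a21.obj B') (1 : ℤ) (hG21 B') X).1
        dsimp only
        rw [F.map_comp, hτ, Category.assoc, ← F.map_comp, hgh, F.map_zero, comp_zero,
          F.map_zero]
      obtain ⟨φ₀x, hφ₀x⟩ : ∃ g : X ⟶ Y, τ = g ≫ _ := Triangle.coyoneda_exact₃ _ ht τ hτh
      have hφ₀ : τ = (show X ⟶ Y from φ₀x) ≫ g := hφ₀x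
      have hΞ : (Φ - F.map (show X ⟶ Y from φ₀x)) ≫ F.map g = 0 := by
        rw [Preadditive.sub_comp, ← hτ, hφ₀, F.map_comp, sub_self]
      obtain ⟨P, hP⟩ : ∃ k : F.obj X ⟶ F.obj (a21.obj B'), Φ - F.map φ₀x = k ≫ F.map f :=
          Triangle.coyoneda_exact₂ _ (F.map_distinguished _ ht)
        (Φ - F.map (show X ⟶ Y from φ₀x)) hΞ
      have hP' : Φ - F.map (show X ⟶ Y from φ₀x) = P ≫ F.map f := hP
      obtain ⟨π, hπ⟩ := (hG21 B' X).2 P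
      dsimp only at hπ
      refine ⟨(show X ⟶ Y from φ₀x) + π ≫ f, ?_⟩
      dsimp only
      rw [F.map_add, F.map_comp, hπ, ← hP']
      abel
  -- essential surjectivity of `F`
  have heps : ∀ (Y : T2) (X : T1), Function.Bijective
      (fun θ : F.obj X ⟶ F.obj (F.rightAdjoint.obj Y) => θ ≫ adj.counit.app Y) := by
    intro Y X
    refine bij_map (e₁ := fun φ : X ⟶ F.rightAdjoint.obj Y => F.map φ)
      (e₂ := fun x : F.obj X ⟶ Y => x)
      (hFF X (F.rightAdjoint.obj Y)) Function.bijective_id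
      (f := fun φ => (adj.homEquiv X Y).symm φ) (adj.homEquiv X Y).symm.bijective ?_
    intro φ
    rw [Adjunction.homEquiv_counit]
  have hepsIso : ∀ (Y : T2) (t : T2) (X₀ : T1), (t ≅ F.obj X₀) →
      Function.Bijective (fun θ : t ⟶ F.obj (F.rightAdjoint.obj Y) => θ ≫ adj.counit.app Y) := by
    intro Y t X₀ e
    refine bij_map (e₁ := fun θ : F.obj X₀ ⟶ F.obj (F.rightAdjoint.obj Y) => e.hom ≫ θ)
      (e₂ := fun x : F.obj X₀ ⟶ Y => e.hom ≫ x)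
      (bij_precomp e.hom) (bij_precomp e.hom) (heps Y X₀) ?_
    intro θ
    rw [Category.assoc]
  have hessObj : ∀ Y : T2, ∃ X : T1, Nonempty (F.obj X ≅ Y) := by
    intro Y
    obtain ⟨Cn, c₁, c₂, htc⟩ := Pretriangulated.distinguished_cocone_triangle (adj.counit.app Y)
    have hVan : ∀ (t : T2) (X₀ X₁ : T1), (t ≅ F.obj X₀) → ((t⟦(-1 : ℤ)⟧) ≅ F.obj X₁) →
        ∀ (ζ : t ⟶ Cn), ζ = 0 := by
      intro t X₀ X₁ e e' ζ
      have hc₂ : c₂ ≫ (adj.counit.app Y)⟦(1 : ℤ)⟧' = 0 := by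
        exact comp_distTriang_mor_zero₃₁ _ htc
      have hu : (ζ ≫ c₂) ≫ (adj.counit.app Y)⟦(1 : ℤ)⟧' = 0 := by
        rw [Category.assoc, hc₂, comp_zero]
      have hnat : (shiftFunctorCompIsoId T2 (1 : ℤ) (-1 : ℤ) (by norm_num)).hom.app
            (F.obj (F.rightAdjoint.obj Y)) ≫ adj.counit.app Y =
          ((adj.counit.app Y)⟦(1 : ℤ)⟧')⟦(-1 : ℤ)⟧' ≫
            (shiftFunctorCompIsoId T2 (1 : ℤ) (-1 : ℤ) (by norm_num)).hom.app Y := by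
        simpa using ((shiftFunctorCompIsoId T2 (1 : ℤ) (-1 : ℤ)
          (by norm_num)).hom.naturality (adj.counit.app Y)).symm
      have hu' : ((ζ ≫ c₂)⟦(-1 : ℤ)⟧' ≫
          (shiftFunctorCompIsoId T2 (1 : ℤ) (-1 : ℤ) (by norm_num)).hom.app
            (F.obj (F.rightAdjoint.obj Y))) ≫ adj.counit.app Y = 0 := by
        rw [Category.assoc, hnat, ← Category.assoc, ← Functor.map_comp, hu,
          Functor.map_zero, zero_comp]
      have hu0 : (ζ ≫ c₂)⟦(-1 : ℤ)⟧' ≫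
          (shiftFunctorCompIsoId T2 (1 : ℤ) (-1 : ℤ) (by norm_num)).hom.app
            (F.obj (F.rightAdjoint.obj Y)) = 0 := by
        apply (hepsIso Y (t⟦(-1 : ℤ)⟧) X₁ e').1
        dsimp only
        rw [zero_comp]
        exact hu'
      have hz1 : (ζ ≫ c₂)⟦(-1 : ℤ)⟧' = 0 := by
        have h4 := congrArg (fun v => v ≫ (shiftFunctorCompIsoId T2 (1 : ℤ) (-1 : ℤ)
          (by norm_num)).inv.app (F.obj (F.rightAdjoint.obj Y))) hu0
        simpa using h4
      have hzc : ζ ≫ c₂ = 0 := by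
        have h3 := (shiftFunctorCompIsoId T2 (-1 : ℤ) (1 : ℤ)
          (neg_add_cancel 1)).hom.naturality (ζ ≫ c₂)
        simp only [Functor.comp_map, Functor.id_map] at h3
        rw [hz1, Functor.map_zero, zero_comp] at h3
        have h4 := congrArg (fun v => (shiftFunctorCompIsoId T2 (-1 : ℤ) (1 : ℤ)
          (neg_add_cancel 1)).inv.app t ≫ v) h3
        simpa using h4.symm
      obtain ⟨ξ, hξ⟩ : ∃ k : t ⟶ (𝟭 T2).obj Y, ζ = k ≫ c₁ :=
        Triangle.coyoneda_exact₃ _ htc ζ hzc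
      obtain ⟨θ, hθ⟩ := (hepsIso Y t X₀ e).2 ξ
      dsimp only at hθ
      have hec : adj.counit.app Y ≫ c₁ = 0 := comp_distTriang_mor_zero₁₂ _ htc
      rw [hξ, ← hθ, Category.assoc, hec, comp_zero]
    obtain ⟨B₅, A₅, f₅, g₅, h₅, ht₅⟩ := hdec2 Cn
    have hiso22 : ∀ B₀ : D22, a22.obj B₀ ≅ F.obj (a21.obj (F2.objPreimage B₀)) := fun B₀ =>
      (a22.mapIso (F2.objObjPreimageIso B₀)).symm ≪≫ (hF2.app (F2.objPreimage B₀)).symm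
    have hiso12 : ∀ A₀ : D12, a12.obj A₀ ≅ F.obj (a11.obj (F1.objPreimage A₀)) := fun A₀ =>
      (a12.mapIso (F1.objObjPreimageIso A₀)).symm ≪≫ (hF1.app (F1.objPreimage A₀)).symm
    have hshiftIso : ∀ (t : T2) (X₀ : T1), (t ≅ F.obj X₀) →
        ((t⟦(-1 : ℤ)⟧) ≅ F.obj (X₀⟦(-1 : ℤ)⟧)) := fun t X₀ e =>
      (shiftFunctor T2 (-1 : ℤ)).mapIso e ≪≫ ((F.commShiftIso (-1 : ℤ)).app X₀).symm
    have hf₅ : f₅ = 0 := hVan (a22.obj B₅) _ _ (hiso22 B₅) (hshiftIso _ _ (hiso22 B₅)) f₅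
    obtain ⟨p, hp⟩ : ∃ k : a12.obj A₅ ⟶ Cn, 𝟙 Cn = g₅ ≫ k := Triangle.yoneda_exact₂ _ ht₅ (𝟙 Cn)
      (by rw [hf₅]; exact zero_comp)
    have hp0 : p = 0 := hVan (a12.obj A₅) _ _ (hiso12 A₅) (hshiftIso _ _ (hiso12 A₅)) p
    have hCzero : IsZero Cn := by
      rw [IsZero.iff_id_eq_zero, hp, hp0, comp_zero]
    haveI : IsIso (adj.counit.app Y) := (Triangle.isZero₃_iff_isIso₁ _ htc).1 hCzero
    exact ⟨F.rightAdjoint.obj Y, ⟨asIso (adj.counit.app Y)⟩⟩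
  exact {
    faithful := { map_injective := fun {X Y} => (hFF X Y).1 }
    full := { map_surjective := fun {X Y} => (hFF X Y).2 }
    essSurj := ⟨hessObj⟩ }
end
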